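/- Every finite subgroup of the semidirect product ℤ⁶ ⋊ ℤ/4ℤ, where the generator of ℤ/4ℤ acts on ℤ⁶ ≅ ℤ² ⊕ ℤ² ⊕ ℤ² by (−1) on the first summand and by the rotation matrix [[0,−1],[1,0]] on each of the last two summands, is isomorphic to the trivial group, ℤ/2ℤ, or ℤ/4ℤ. -/

import Mathlib

/-- The sign by which `k ∈ ℤ/4ℤ` acts on the first summand `ℤ²` (action by `-1`). -/
def sgn (k : ZMod 4) : ℤ := if Even k.val then 1 else -1

/-- The "cosine" of the rotation `[[0,-1],[1,0]]ᵏ` acting on the last two summands `ℤ²`. -/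
def cc (k : ZMod 4) : ℤ := if k = 0 then 1 else if k = 2 then -1 else 0

/-- The "sine" of the rotation `[[0,-1],[1,0]]ᵏ` acting on the last two summands `ℤ²`. -/
def dd (k : ZMod 4) : ℤ := if k = 1 then 1 else if k = 3 then -1 else 0

lemma sgn_add : ∀ k l : ZMod 4, sgn (k + l) = sgn k * sgn l := by decide
lemma cc_add : ∀ k l : ZMod 4, cc (k + l) = cc k * cc l - dd k * dd l := by decide
lemma dd_add : ∀ k l : ZMod 4, dd (k + l) = dd k * cc l + cc k * dd l := by decide

/-- The Vafa–Witten group `Γ = ℤ⁶ ⋊ ℤ/4ℤ`: the element `k ∈ ℤ/4ℤ` acts on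
`ℤ⁶ ≅ ℤ² ⊕ ℤ² ⊕ ℤ²` (coordinates `(a,b,c,d,e,f)`) by `(-1)ᵏ` on `(a,b)` and by the rotation
matrix `[[0,-1],[1,0]]ᵏ` on `(c,d)` and on `(e,f)` (the action induced by
`(z₁,z₂,z₃) ↦ (-z₁, iz₂, iz₃)` on `ℂ³` restricted to the lattice `(ℤ+iℤ)³`). -/
@[ext] structure VafaWittenGroup where
  a : ℤ
  b : ℤ
  c : ℤ
  d : ℤ
  e : ℤ
  f : ℤ
  k : ZMod 4

namespace VafaWittenGroup

instance : Mul VafaWittenGroup :=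
  ⟨fun g h => ⟨g.a + sgn g.k * h.a, g.b + sgn g.k * h.b,
    g.c + (cc g.k * h.c - dd g.k * h.d), g.d + (dd g.k * h.c + cc g.k * h.d),
    g.e + (cc g.k * h.e - dd g.k * h.f), g.f + (dd g.k * h.e + cc g.k * h.f),
    g.k + h.k⟩⟩
instance : One VafaWittenGroup := ⟨⟨0, 0, 0, 0, 0, 0, 0⟩⟩
instance : Inv VafaWittenGroup :=
  ⟨fun g => ⟨-(sgn (-g.k) * g.a), -(sgn (-g.k) * g.b),
    -(cc (-g.k) * g.c - dd (-g.k) * g.d), -(dd (-g.k) * g.c + cc (-g.k) * g.d),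
    -(cc (-g.k) * g.e - dd (-g.k) * g.f), -(dd (-g.k) * g.e + cc (-g.k) * g.f),
    -g.k⟩⟩

lemma mul_def (g h : VafaWittenGroup) :
    g * h = ⟨g.a + sgn g.k * h.a, g.b + sgn g.k * h.b,
      g.c + (cc g.k * h.c - dd g.k * h.d), g.d + (dd g.k * h.c + cc g.k * h.d),
      g.e + (cc g.k * h.e - dd g.k * h.f), g.f + (dd g.k * h.e + cc g.k * h.f),
      g.k + h.k⟩ := rfl

lemma inv_def (g : VafaWittenGroup) :
    g⁻¹ = ⟨-(sgn (-g.k) * g.a), -(sgn (-g.k) * g.b),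
      -(cc (-g.k) * g.c - dd (-g.k) * g.d), -(dd (-g.k) * g.c + cc (-g.k) * g.d),
      -(cc (-g.k) * g.e - dd (-g.k) * g.f), -(dd (-g.k) * g.e + cc (-g.k) * g.f),
      -g.k⟩ := rfl

instance : Group VafaWittenGroup where
  mul_assoc x y z := by
    simp only [mul_def, mk.injEq, sgn_add, cc_add, dd_add]
    refine ⟨by ring, by ring, by ring, by ring, by ring, by ring, add_assoc _ _ _⟩
  one_mul g := by
    show mk (0 + sgn 0 * g.a) (0 + sgn 0 * g.b) (0 + (cc 0 * g.c - dd 0 * g.d))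
      (0 + (dd 0 * g.c + cc 0 * g.d)) (0 + (cc 0 * g.e - dd 0 * g.f))
      (0 + (dd 0 * g.e + cc 0 * g.f)) (0 + g.k) = g
    have h1 : sgn 0 = 1 := by decide
    have h2 : cc 0 = 1 := by decide
    have h3 : dd 0 = 0 := by decide
    simp [h1, h2, h3]
  mul_one g := by
    show mk (g.a + sgn g.k * 0) (g.b + sgn g.k * 0) (g.c + (cc g.k * 0 - dd g.k * 0))
      (g.d + (dd g.k * 0 + cc g.k * 0)) (g.e + (cc g.k * 0 - dd g.k * 0))
      (g.f + (dd g.k * 0 + cc g.k * 0)) (g.k + 0) = g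
    simp
  inv_mul_cancel g := by
    show _ = mk 0 0 0 0 0 0 0
    simp only [mul_def, inv_def, mk.injEq]
    refine ⟨by ring, by ring, by ring, by ring, by ring, by ring, neg_add_cancel _⟩

end VafaWittenGroup

namespace VafaWittenGroup

/-- The projection to `ℤ/4ℤ` as a monoid hom to `Multiplicative (ZMod 4)`. -/
def proj : VafaWittenGroup →* Multiplicative (ZMod 4) where
  toFun g := Multiplicative.ofAdd g.k
  map_one' := rfl
  map_mul' _ _ := rfl

lemma pow_of_k_eq_zero (g : VafaWittenGroup) (hk : g.k = 0) (n : ℕ) :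
    g ^ n = ⟨n * g.a, n * g.b, n * g.c, n * g.d, n * g.e, n * g.f, 0⟩ := by
  induction n with
  | zero => ext <;> simp [pow_zero] <;> rfl
  | succ n ih =>
    rw [pow_succ, ih, mul_def]
    have h1 : sgn 0 = 1 := by decide
    have h2 : cc 0 = 1 := by decide
    have h3 : dd 0 = 0 := by decide
    simp only [h1, h2, h3, hk]
    ext <;> simp <;> push_cast <;> ring

lemma eq_one_of_k_eq_zero_of_finiteOrder (g : VafaWittenGroup) (hk : g.k = 0)
    (h : IsOfFinOrder g) : g = 1 := by
  obtain ⟨n, hn, hgn⟩ := h.exists_pow_eq_one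
  rw [pow_of_k_eq_zero g hk n] at hgn
  have h1 : (1 : VafaWittenGroup) = ⟨0, 0, 0, 0, 0, 0, 0⟩ := rfl
  rw [h1, mk.injEq] at hgn
  obtain ⟨ha, hb, hc, hd, he, hf, -⟩ := hgn
  have hn' : (n : ℤ) ≠ 0 := by exact_mod_cast hn.ne'
  ext
  · exact (mul_eq_zero.1 ha).resolve_left hn'
  · exact (mul_eq_zero.1 hb).resolve_left hn'
  · exact (mul_eq_zero.1 hc).resolve_left hn'
  · exact (mul_eq_zero.1 hd).resolve_left hn'
  · exact (mul_eq_zero.1 he).resolve_left hn'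
  · exact (mul_eq_zero.1 hf).resolve_left hn'
  · exact hk

end VafaWittenGroup

/-- Every finite subgroup of the Vafa–Witten group `ℤ⁶ ⋊ ℤ/4ℤ` is isomorphic to
the trivial group, `ℤ/2ℤ`, or `ℤ/4ℤ`. -/
theorem finite_subgroups_of_VafaWittenGroup (P : Subgroup VafaWittenGroup) (hP : Finite P) :
    Nonempty (P ≃* Multiplicative (ZMod 1)) ∨ Nonempty (P ≃* Multiplicative (ZMod 2)) ∨
      Nonempty (P ≃* Multiplicative (ZMod 4)) := by
  classical
  set ψ : P →* Multiplicative (ZMod 4) := VafaWittenGroup.proj.comp P.subtype with hψ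
  have hinj : Function.Injective ψ := by
    rw [← MonoidHom.ker_eq_bot_iff, eq_bot_iff]
    intro g hg
    have hk : (g : VafaWittenGroup).k = 0 := by
      simpa [hψ, VafaWittenGroup.proj] using hg
    have hfin : IsOfFinOrder (g : VafaWittenGroup) := by
      obtain ⟨n, hn, hgn⟩ := (isOfFinOrder_of_finite g).exists_pow_eq_one
      refine isOfFinOrder_iff_pow_eq_one.mpr ⟨n, hn, ?_⟩
      exact congrArg (Subtype.val) hgn
    have := VafaWittenGroup.eq_one_of_k_eq_zero_of_finiteOrder _ hk hfin
    exact Subgroup.mem_bot.mpr (Subtype.ext this)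
  have e1 : P ≃* ψ.range := MonoidHom.ofInjective hinj
  have hc4 : IsCyclic (Multiplicative (ZMod 4)) := by infer_instance
  have hcR : IsCyclic ψ.range := Subgroup.isCyclic _
  have hcP : IsCyclic P := isCyclic_of_surjective e1.symm e1.symm.surjective
  have hcard : Nat.card P ∣ 4 := by
    have h1 : Nat.card P = Nat.card ψ.range := Nat.card_congr e1.toEquiv
    have h2 : Nat.card ψ.range ∣ Nat.card (Multiplicative (ZMod 4)) :=
      Subgroup.card_subgroup_dvd_card _
    have h3 : Nat.card (Multiplicative (ZMod 4)) = 4 := by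
      simp [Nat.card_eq_fintype_card]
    rw [h3] at h2
    rw [h1]; exact h2
  obtain ⟨n, hn⟩ : ∃ n, Nat.card P = n := ⟨_, rfl⟩
  rw [hn] at hcard
  have hle : n ≤ 4 := Nat.le_of_dvd (by norm_num) hcard
  have hpos : 0 < n := hn ▸ Nat.card_pos
  have e := zmodCyclicMulEquiv hcP
  rw [hn] at e
  interval_cases n
  · exact Or.inl ⟨e.symm⟩
  · exact Or.inr (Or.inl ⟨e.symm⟩)
  · exact absurd hcard (by decide)
  · exact Or.inr (Or.inr ⟨e.symm⟩)
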